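/- Let E be a commutative ℚ-algebra that is finite-dimensional as a ℚ-vector space, let p be a prime number, and let k be a positive integer. If the unit group of E contains an element of multiplicative order p^k, then φ(p^k) ≤ dim_ℚ E, where φ is Euler's totient function. -/
import Mathlib

open Polynomial

set_option maxHeartbeats 1000000 in
/-- Lemma `muApremark`(iv): if the unit group of a finite-dimensional commutative
`ℚ`-algebra `E` contains an element of order `p^k` (`p` prime, `k ≥ 1`), then
`φ(p^k) ≤ dim_ℚ E`. -/
theorem stmt_7 {E : Type*} [CommRing E] [Algebra ℚ E] [FiniteDimensional ℚ E]
    (p k : ℕ) (hp : p.Prime) (hk : 0 < k)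
    (u : Eˣ) (hu : orderOf u = p ^ k) :
    Nat.totient (p ^ k) ≤ Module.finrank ℚ E := by
  haveI : Fact p.Prime := ⟨hp⟩
  obtain ⟨n, rfl⟩ : ∃ n, k = n + 1 := ⟨k - 1, (Nat.succ_pred_eq_of_pos hk).symm⟩
  -- E is nontrivial
  have hune : u ≠ 1 := by
    intro h
    rw [h, orderOf_one] at hu
    exact (Nat.one_lt_pow (Nat.succ_ne_zero n) hp.one_lt).ne' hu.symm
  haveI : Nontrivial E := ⟨(u : E), 1, fun h => hune (Units.ext h)⟩
  set x : E := (u : E)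
  have hint : IsIntegral ℚ x := IsIntegral.of_finite ℚ x
  set m := minpoly ℚ x with hm
  have hmne : m ≠ 0 := minpoly.ne_zero hint
  have hxpow : x ^ p ^ (n + 1) = 1 := by
    have h1 : u ^ p ^ (n + 1) = 1 := by rw [← hu]; exact pow_orderOf_eq_one u
    calc x ^ p ^ (n + 1) = ((u ^ p ^ (n + 1) : Eˣ) : E) := by
          rw [Units.val_pow_eq_pow_val]
      _ = 1 := by rw [h1]; rfl
  have hdvd : m ∣ X ^ p ^ (n + 1) - 1 := by
    apply minpoly.dvd
    simp [hxpow]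
  have hfac : cyclotomic (p ^ (n + 1)) ℚ * (X ^ p ^ n - 1) = X ^ p ^ (n + 1) - 1 :=
    cyclotomic_prime_pow_mul_X_pow_sub_one ℚ p n
  have hirr : Irreducible (cyclotomic (p ^ (n + 1)) ℚ) :=
    cyclotomic.irreducible_rat (pow_pos hp.pos _)
  have hΦdvd : cyclotomic (p ^ (n + 1)) ℚ ∣ m := by
    by_contra hnd
    have hcop : IsCoprime (cyclotomic (p ^ (n + 1)) ℚ) m :=
      hirr.coprime_iff_not_dvd.mpr hnd
    have hmd : m ∣ X ^ p ^ n - 1 := by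
      refine hcop.symm.dvd_of_dvd_mul_left ?_
      rwa [hfac]
    have : x ^ p ^ n = 1 := by
      have := minpoly.aeval ℚ x
      obtain ⟨c, hc⟩ := hmd
      have h0 : (Polynomial.aeval x) (X ^ p ^ n - 1 : ℚ[X]) = 0 := by
        rw [hc, map_mul, this, zero_mul]
      simpa [sub_eq_zero] using h0
    have hu1 : u ^ p ^ n = 1 := Units.ext (by simpa using this)
    have := orderOf_dvd_of_pow_eq_one hu1
    rw [hu] at this
    have hle := Nat.le_of_dvd (pow_pos hp.pos _) this
    exact absurd (Nat.pow_le_pow_iff_right hp.one_lt |>.mp hle) (by omega)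
  calc Nat.totient (p ^ (n + 1)) = (cyclotomic (p ^ (n + 1)) ℚ).natDegree :=
        (natDegree_cyclotomic _ _).symm
    _ ≤ m.natDegree := natDegree_le_of_dvd hΦdvd hmne
    _ ≤ Module.finrank ℚ E := by
        set f : E →ₗ[ℚ] E := Algebra.lmul ℚ E x with hf
        have hch : (Polynomial.aeval x) f.charpoly = 0 := by
          have h0 : Polynomial.aeval f f.charpoly = 0 := f.aeval_self_charpoly
          have h1 : Polynomial.aeval f f.charpoly = Algebra.lmul ℚ E ((Polynomial.aeval x) f.charpoly) := by
            rw [hf, Polynomial.aeval_algHom_apply (Algebra.lmul ℚ E) x f.charpoly]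
          have h2 : Algebra.lmul ℚ E ((Polynomial.aeval x) f.charpoly) = 0 := by
            rw [← h1, h0]
          have := congrArg (fun g : E →ₗ[ℚ] E => g 1) h2
          simpa using this
        have hdeg : m.degree ≤ f.charpoly.degree :=
          minpoly.degree_le_of_ne_zero ℚ x f.charpoly_monic.ne_zero hch
        have := Polynomial.natDegree_le_natDegree hdeg
        rwa [f.charpoly_natDegree] at this
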